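/- arXiv:1807.00307 — 3 statements merged into one kernel-verified Lean document; each statement's English description precedes it below -/
import Mathlib

section
/- A nonabelian finite subgroup of the unit group of the quaternions ℍ contains an ℝ-basis of ℍ; in particular, its ℝ-span is all of ℍ. -/
set_option maxHeartbeats 1000000 in
private lemma det4_aux (a b c d e f g h i j k l : ℝ) :
    Matrix.det !![1,a,b,c; 0,d,e,f; 0,g,h,i; 0,j,k,l] =
      d*h*l - d*i*k - e*g*l + e*i*j + f*g*k - f*h*j := by
  rw [Matrix.det_succ_column_zero]
  simp [Fin.sum_univ_succ, Matrix.det_fin_three]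

private noncomputable def e4 : Module.Basis (Fin 4) ℝ (Quaternion ℝ) :=
  QuaternionAlgebra.basisOneIJK (-1 : ℝ) 0 (-1)

private lemma key (p q : Quaternion ℝ) (hpq : p * q ≠ q * p) :
    Submodule.span ℝ (Set.range ![1, p, q, p*q]) = ⊤ := by
  have hM : e4.toMatrix ![1, p, q, p*q] =
      !![1, p.re, q.re, (p*q).re; 0, p.imI, q.imI, (p*q).imI;
         0, p.imJ, q.imJ, (p*q).imJ; 0, p.imK, q.imK, (p*q).imK] := by
    ext i j
    rw [Module.Basis.toMatrix_apply, show ∀ x : Quaternion ℝ, e4.repr x = ![x.re, x.imI, x.imJ, x.imK] from fun _ => rfl]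
    fin_cases i <;> fin_cases j <;>
      simp <;> rfl
  have hd : e4.det ![1, p, q, p*q] =
      (p.imJ * q.imK - p.imK * q.imJ)^2 + (p.imK * q.imI - p.imI * q.imK)^2
        + (p.imI * q.imJ - p.imJ * q.imI)^2 := by
    rw [Module.Basis.det_apply, hM, det4_aux]
    simp only [Quaternion.imI_mul, Quaternion.imJ_mul, Quaternion.imK_mul]
    ring
  have hne : e4.det ![1, p, q, p*q] ≠ 0 := by
    rw [hd]
    intro h0
    have h1 : p.imJ * q.imK - p.imK * q.imJ = 0 := by nlinarith [sq_nonneg (p.imJ * q.imK - p.imK * q.imJ), sq_nonneg (p.imK * q.imI - p.imI * q.imK), sq_nonneg (p.imI * q.imJ - p.imJ * q.imI)]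
    have h2 : p.imK * q.imI - p.imI * q.imK = 0 := by nlinarith [sq_nonneg (p.imJ * q.imK - p.imK * q.imJ), sq_nonneg (p.imK * q.imI - p.imI * q.imK), sq_nonneg (p.imI * q.imJ - p.imJ * q.imI)]
    have h3 : p.imI * q.imJ - p.imJ * q.imI = 0 := by nlinarith [sq_nonneg (p.imJ * q.imK - p.imK * q.imJ), sq_nonneg (p.imK * q.imI - p.imI * q.imK), sq_nonneg (p.imI * q.imJ - p.imJ * q.imI)]
    apply hpq
    ext <;>
      simp only [Quaternion.re_mul, Quaternion.imI_mul, Quaternion.imJ_mul,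
        Quaternion.imK_mul] <;> linarith
  exact ((Module.Basis.is_basis_iff_det e4).mpr (isUnit_iff_ne_zero.mpr hne)).2

/-- A nonabelian finite subgroup of the unit group of the quaternions ℍ
contains an ℝ-basis of ℍ; in particular, its ℝ-span is all of ℍ. -/
theorem stmt_0 (G : Subgroup (Quaternion ℝ)ˣ) [Finite G]
    (h : ¬ ∀ a b : G, a * b = b * a) :
    Submodule.span ℝ ((fun u : (Quaternion ℝ)ˣ => (u : Quaternion ℝ)) '' (G : Set (Quaternion ℝ)ˣ)) = ⊤ := by
  push_neg at h
  obtain ⟨a, b, hab⟩ := h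
  set p : Quaternion ℝ := ((a : (Quaternion ℝ)ˣ) : Quaternion ℝ)
  set q : Quaternion ℝ := ((b : (Quaternion ℝ)ˣ) : Quaternion ℝ)
  have hpq : p * q ≠ q * p := by
    intro hc
    apply hab
    have : ((a * b : G) : (Quaternion ℝ)ˣ) = ((b * a : G) : (Quaternion ℝ)ˣ) := by
      apply Units.ext
      simpa using hc
    exact Subtype.ext this
  rw [eq_top_iff, ← key p q hpq]
  apply Submodule.span_mono
  rw [Set.range_subset_iff]
  intro i
  fin_cases i
  · exact ⟨1, G.one_mem, by simp⟩
  · exact ⟨a, a.2, rfl⟩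
  · exact ⟨b, b.2, rfl⟩
  · exact ⟨(a : (Quaternion ℝ)ˣ) * b, G.mul_mem a.2 b.2, by simp [p, q]⟩
end

section
/- If G is a finite group with a surjective homomorphism onto a nonabelian finite subgroup of ℍˣ, then the induced ℝ-algebra representation ℝ[G] → ℍ is irreducible, i.e. ℍ is a simple ℝ[G]-module under this action. -/
open Quaternion

/-- A submodule structure coming from a surjective ring hom onto a division ring is simple. -/
theorem aux_simple {R D : Type*} [Ring R] [DivisionRing D] (ρ : R →+* D)
    (hρ : Function.Surjective ρ) :
    @IsSimpleModule R _ D _ (Module.compHom D ρ) := by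
  letI := Module.compHom D ρ
  have hsmul : ∀ (r : R) (x : D), r • x = ρ r * x := fun r x => rfl
  haveI : Nontrivial (Submodule R D) := by
    refine ⟨⊥, ⊤, fun hbt => ?_⟩
    have : (1 : D) ∈ (⊥ : Submodule R D) := hbt ▸ Submodule.mem_top
    simpa using this
  rw [isSimpleModule_iff]
  constructor
  intro N
  rcases eq_or_ne N ⊥ with hN | hN
  · exact Or.inl hN
  · right
    obtain ⟨x, hxN, hx0⟩ := Submodule.exists_mem_ne_zero_of_ne_bot hN
    rw [eq_top_iff]
    intro y _
    obtain ⟨r, hr⟩ := hρ (y * x⁻¹)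
    have : r • x = y := by rw [hsmul, hr, inv_mul_cancel_right₀ hx0]
    exact this ▸ N.smul_mem r hxN

theorem pure_sq (p : ℍ) (hp : p.re = 0) : p * p = (-(normSq p) : ℝ) • 1 := by
  ext <;> simp [Quaternion.normSq_def', hp] <;> ring

/-- A real subalgebra of the quaternions containing two noncommuting elements is everything. -/
theorem subalg_eq_top (A : Subalgebra ℝ ℍ) (u v : ℍ) (hu : u ∈ A) (hv : v ∈ A)
    (huv : u * v ≠ v * u) : A = ⊤ := by
  set p : ℍ := u - (u.re : ℍ) with hpdef
  set s : ℍ := v - (v.re : ℍ) with hsdef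
  have hp : p.re = 0 := by simp [hpdef]
  have hs : s.re = 0 := by simp [hsdef]
  have hcomm : u * v - v * u = p * s - s * p := by
    rw [hpdef, hsdef]; ext <;> simp <;> ring
  set w : ℍ := p * s - s * p with hwdef
  have hw0 : w ≠ 0 := fun hz => huv (sub_eq_zero.mp (hcomm.trans hz))
  have hwre : w.re = 0 := by simp [hwdef, hp, hs]; ring
  have hpw : p * w = -(w * p) := by
    rw [hwdef]; ext <;> simp [hp, hs] <;> ring
  have hp0 : p ≠ 0 := by
    intro hz
    exact hw0 (by rw [hwdef, hz]; simp)
  have hpA : p ∈ A := A.sub_mem hu (A.algebraMap_mem u.re)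
  have hsA : s ∈ A := A.sub_mem hv (A.algebraMap_mem v.re)
  have hwA : w ∈ A := A.sub_mem (A.mul_mem hpA hsA) (A.mul_mem hsA hpA)
  have hnp : (0:ℝ) < normSq p := lt_of_le_of_ne (Quaternion.normSq_nonneg) (Ne.symm (Quaternion.normSq_ne_zero.mpr hp0))
  have hnw : (0:ℝ) < normSq w := lt_of_le_of_ne (Quaternion.normSq_nonneg) (Ne.symm (Quaternion.normSq_ne_zero.mpr hw0))
  set a : ℝ := Real.sqrt (normSq p) with hadef
  set b : ℝ := Real.sqrt (normSq w) with hbdef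
  have ha : 0 < a := Real.sqrt_pos.mpr hnp
  have hb : 0 < b := Real.sqrt_pos.mpr hnw
  have ha2 : a * a = normSq p := Real.mul_self_sqrt hnp.le
  have hb2 : b * b = normSq w := Real.mul_self_sqrt hnw.le
  set i : ℍ := a⁻¹ • p with hidef
  set j : ℍ := b⁻¹ • w with hjdef
  have hii : i * i = (-1 : ℝ) • (1 : ℍ) := by
    rw [hidef, smul_mul_smul_comm, pure_sq p hp, smul_smul]
    congr 1
    field_simp
    nlinarith [ha2]
  have hjj : j * j = (-1 : ℝ) • (1 : ℍ) := by
    rw [hjdef, smul_mul_smul_comm, pure_sq w hwre, smul_smul]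
    congr 1
    field_simp
    nlinarith [hb2]
  have hji : j * i = -(i * j) := by
    rw [hidef, hjdef, smul_mul_smul_comm, smul_mul_smul_comm, mul_comm (b⁻¹) (a⁻¹)]
    rw [hpw, smul_neg]
    exact (neg_neg _).symm
  let B : QuaternionAlgebra.Basis ℍ (-1 : ℝ) (0 : ℝ) (-1 : ℝ) :=
    { i := i, j := j, k := i * j
      i_mul_i := by rw [hii]; simp, j_mul_j := hjj, i_mul_j := rfl, j_mul_i := by rw [hji]; simp }
  let f : Quaternion ℝ →ₐ[ℝ] Quaternion ℝ := B.liftHom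
  have hfinj : Function.Injective f := f.toRingHom.injective
  have hfsurj : Function.Surjective f :=
    (LinearMap.injective_iff_surjective (f := f.toLinearMap)).mp hfinj
  have hiA : i ∈ A := A.smul_mem hpA _
  have hjA : j ∈ A := A.smul_mem hwA _
  have hkA : i * j ∈ A := A.mul_mem hiA hjA
  have hrange : ∀ q : Quaternion ℝ, f q ∈ A := by
    intro q
    show B.lift q ∈ A
    unfold QuaternionAlgebra.Basis.lift
    exact A.add_mem (A.add_mem (A.add_mem (A.algebraMap_mem _)
      (A.smul_mem hiA _)) (A.smul_mem hjA _)) (A.smul_mem hkA _)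
  rw [eq_top_iff]
  intro y _
  obtain ⟨q, rfl⟩ := hfsurj y
  exact hrange q

/-- If `G` is a finite group with a homomorphism `φ : G → ℍˣ` whose image is
nonabelian, then the induced ℝ-algebra representation `ℝ[G] → ℍ` is irreducible, i.e. `ℍ` is
a simple `ℝ[G]`-module under this action. -/
theorem stmt_2 (G : Type) [Group G] [Finite G] (φ : G →* (Quaternion ℝ)ˣ)
    (h : ¬ ∀ a b : φ.range, a * b = b * a) :
    @IsSimpleModule (MonoidAlgebra ℝ G) _ (Quaternion ℝ) _
      (Module.compHom (Quaternion ℝ)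
        ((MonoidAlgebra.lift ℝ (Quaternion ℝ) G
          ((Units.coeHom (Quaternion ℝ)).comp φ)).toRingHom)) := by
  set ρ := MonoidAlgebra.lift ℝ (Quaternion ℝ) G ((Units.coeHom (Quaternion ℝ)).comp φ) with hρdef
  push_neg at h
  obtain ⟨a, b, hab⟩ := h
  -- a b : φ.range
  obtain ⟨ga, hga⟩ := a.2
  obtain ⟨gb, hgb⟩ := b.2
  have huv : ((a : (Quaternion ℝ)ˣ) : Quaternion ℝ) * ((b : (Quaternion ℝ)ˣ) : Quaternion ℝ) ≠
      ((b : (Quaternion ℝ)ˣ) : Quaternion ℝ) * ((a : (Quaternion ℝ)ˣ) : Quaternion ℝ) := by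
    intro hc
    apply hab
    apply Subtype.ext
    apply Units.ext
    push_cast
    exact hc
  have hmem : ∀ g : G, ((φ g : (Quaternion ℝ)ˣ) : Quaternion ℝ) ∈ ρ.range := by
    intro g
    refine ⟨MonoidAlgebra.single g 1, ?_⟩
    simp [hρdef, MonoidAlgebra.lift_single]
  have hA : ρ.range = ⊤ := by
    refine subalg_eq_top ρ.range _ _ ?_ ?_ huv
    · rw [← hga]; exact hmem ga
    · rw [← hgb]; exact hmem gb
  have hsurj : Function.Surjective ρ.toRingHom := by
    intro y
    have : y ∈ ρ.range := hA ▸ Algebra.mem_top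
    exact this
  exact aux_simple ρ.toRingHom hsurj
end

section
/- For n ≥ 2, the number of copies of ℍ in the Wedderburn decomposition of ℝ[Q_{4n}] equals ⌊n/2⌋. -/
open Quaternion Complex Real
set_option linter.unusedSectionVars false
set_option maxHeartbeats 1000000

noncomputable section
namespace Stmt17

/-! ### Basic quaternion constants -/

def II : ℍ[ℝ] := ⟨0,1,0,0⟩
def J : ℍ[ℝ] := ⟨0,0,1,0⟩

lemma J_mul_J : J * J = -1 := by ext <;> simp only [Quaternion.re_mul, Quaternion.imI_mul, Quaternion.imJ_mul, Quaternion.imK_mul] <;> simp [J]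

lemma coeComplex_neg (w : ℂ) : ((-w : ℂ) : ℍ[ℝ]) = -(w : ℍ[ℝ]) := by
  ext <;> simp

lemma coe_mul_J (w : ℂ) : (w : ℍ[ℝ]) * J = J * ((starRingEnd ℂ) w : ℍ[ℝ]) := by
  ext <;> simp only [Quaternion.re_mul, Quaternion.imI_mul, Quaternion.imJ_mul, Quaternion.imK_mul] <;> simp [J]

lemma coeComplex_injective : Function.Injective (fun w : ℂ => (w : ℍ[ℝ])) := by
  intro w w' h
  have h1 := congrArg QuaternionAlgebra.re h
  have h2 := congrArg QuaternionAlgebra.imI h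
  simp only [Quaternion.re_coeComplex, Quaternion.imI_coeComplex] at h1 h2
  exact Complex.ext h1 h2

lemma pow_mod_eq {M : Type*} [Monoid M] {x : M} {N : ℕ} (h : x ^ N = 1) (m : ℕ) :
    x ^ (m % N) = x ^ m := by
  conv_rhs => rw [← Nat.mod_add_div m N]
  rw [pow_add, pow_mul, h, one_pow, mul_one]

variable {n : ℕ} [NeZero n] {z : ℂ} (hz : z ^ n = -1)

include hz

lemma hz2n : z ^ (2 * n) = 1 := by
  rw [two_mul, pow_add, hz]; ring

lemma abs_z : ‖z‖ = 1 := by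
  have h : ‖z‖ ^ n = 1 := by
    rw [← norm_pow, hz]; simp
  rcases lt_trichotomy (‖z‖) 1 with h1 | h1 | h1
  · have := pow_lt_one₀ (norm_nonneg z) h1 (NeZero.ne n); linarith
  · exact h1
  · have := one_lt_pow₀ h1 (NeZero.ne n); linarith

omit hz in
/-- `E z i = z ^ i.val`. -/
def E (z : ℂ) (i : ZMod (2 * n)) : ℂ := z ^ i.val

lemma E_add (i j : ZMod (2 * n)) : E z (i + j) = E z i * E z j := by
  have : NeZero (2 * n) := ⟨by have := NeZero.ne n; omega⟩
  rw [E, E, E, ZMod.val_add, pow_mod_eq (hz2n hz), pow_add]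

omit hz in
lemma E_zero : E z (0 : ZMod (2*n)) = 1 := by
  have : NeZero (2 * n) := ⟨by have := NeZero.ne n; omega⟩
  simp [E]

lemma E_ne_zero (i : ZMod (2 * n)) : E z i ≠ 0 := by
  have : z ≠ 0 := by rintro rfl; simp [zero_pow (NeZero.ne n), eq_comm] at hz
  exact pow_ne_zero _ this

lemma E_neg (i : ZMod (2 * n)) : E z (-i) = (E z i)⁻¹ := by
  have h1 : E z (i + (-i)) = 1 := by rw [add_neg_cancel, E_zero]
  rw [E_add hz] at h1
  exact eq_inv_of_mul_eq_one_right (by linear_combination h1)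

lemma star_E (i : ZMod (2 * n)) : (starRingEnd ℂ) (E z i) = (E z i)⁻¹ := by
  have h1 : ‖E z i‖ = 1 := by rw [E, norm_pow, abs_z hz, one_pow]
  rw [Complex.inv_def, Complex.normSq_eq_norm_sq, h1]
  simp

lemma E_n : E z ((n : ZMod (2*n))) = -1 := by
  have h2 : ((n : ZMod (2*n))).val = n := by
    have hn := Nat.pos_of_ne_zero (NeZero.ne n)
    have : NeZero (2 * n) := ⟨by omega⟩
    rw [ZMod.val_natCast, Nat.mod_eq_of_lt (by omega)]
  rw [E, h2, hz]

lemma E_one (hn1 : 1 < 2 * n) : E z (1 : ZMod (2*n)) = z := by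
  have : Fact (1 < 2 * n) := ⟨hn1⟩
  rw [E, ZMod.val_one, pow_one]

omit hz in
/-- The underlying function of the monoid hom `QuaternionGroup n → ℍ`. -/
def phi (z : ℂ) : QuaternionGroup n → ℍ[ℝ]
  | QuaternionGroup.a i => (E z i : ℍ[ℝ])
  | QuaternionGroup.xa i => J * (E z i : ℍ[ℝ])

lemma phi_mul (g h : QuaternionGroup n) : phi z (g * h) = phi z g * phi z h := by
  rcases g with i | i <;> rcases h with j | j <;>
    simp only [QuaternionGroup.a_mul_a, QuaternionGroup.a_mul_xa, QuaternionGroup.xa_mul_a,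
      QuaternionGroup.xa_mul_xa, phi]
  · rw [E_add hz]; push_cast; ring
  · rw [sub_eq_add_neg, E_add hz, E_neg hz, ← star_E hz, ← mul_assoc, coe_mul_J, mul_assoc,
      ← Quaternion.coeComplex_mul, mul_comm ((starRingEnd ℂ) (E z i))]
  · rw [E_add hz, Quaternion.coeComplex_mul, mul_assoc]
  · rw [sub_eq_add_neg, E_add hz, E_add hz, E_n hz, E_neg hz, ← star_E hz]
    conv_rhs => rw [mul_assoc, ← mul_assoc (E z i : ℍ[ℝ]) J, coe_mul_J,
      ← mul_assoc J (J * ((starRingEnd ℂ) (E z i) : ℍ[ℝ])), ← mul_assoc J J, J_mul_J]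
    rw [show ((-1 : ℂ) * E z j * (starRingEnd ℂ) (E z i))
        = -((starRingEnd ℂ) (E z i) * E z j) from by ring, coeComplex_neg,
      Quaternion.coeComplex_mul]
    noncomm_ring

/-- The monoid hom `QuaternionGroup n →* ℍ`. -/
def phiHom (z : ℂ) (hz : z ^ n = -1) : QuaternionGroup n →* ℍ[ℝ] where
  toFun := phi z
  map_one' := by show phi z (QuaternionGroup.a 0) = 1; simp [phi, E_zero]
  map_mul' := phi_mul hz

omit hz in
/-- The algebra hom `ℝ[QuaternionGroup n] → ℍ`. -/
def FF (z : ℂ) : MonoidAlgebra ℝ (QuaternionGroup n) →ₐ[ℝ] ℍ[ℝ] :=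
  if h : z ^ n = -1 then MonoidAlgebra.lift ℝ ℍ[ℝ] (QuaternionGroup n) (phiHom z h)
  else MonoidAlgebra.lift ℝ ℍ[ℝ] (QuaternionGroup n) 1

lemma FF_of (g : QuaternionGroup n) :
    FF z (MonoidAlgebra.of ℝ (QuaternionGroup n) g) = phi z g := by
  rw [FF, dif_pos hz]
  exact MonoidAlgebra.lift_of _ _

lemma FF_single (g : QuaternionGroup n) (r : ℝ) :
    FF z (MonoidAlgebra.single g r) = r • phi z g := by
  rw [FF, dif_pos hz]
  exact MonoidAlgebra.lift_single _ _ _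

/-! ### Surjectivity -/

omit hz in
lemma top_of_mem (s : Subalgebra ℝ ℍ[ℝ]) (q : ℍ[ℝ]) (hq : q ∈ s) (hqi : q.imI ≠ 0)
    (hqJ : q.imJ = 0) (hqK : q.imK = 0) (hJ : J ∈ s) : s = ⊤ := by
  have hi : II ∈ s := by
    have h1 : (q.imI)⁻¹ • (q - algebraMap ℝ ℍ[ℝ] q.re) ∈ s :=
      s.smul_mem (s.sub_mem hq (s.algebraMap_mem _)) _
    convert h1 using 1
    ext <;> simp [Quaternion.algebraMap_def, II, hqJ, hqK, inv_mul_cancel₀ hqi]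
  rw [eq_top_iff]
  intro w _
  have := s.add_mem (s.add_mem (s.add_mem (s.algebraMap_mem w.re)
    (s.smul_mem hi w.imI)) (s.smul_mem hJ w.imJ)) (s.smul_mem (s.mul_mem hi hJ) w.imK)
  convert this using 1
  ext <;> simp [Quaternion.algebraMap_def, Quaternion.re_mul, Quaternion.imI_mul, Quaternion.imJ_mul, Quaternion.imK_mul] <;> simp [II, J]

lemma FF_surjective (him : z.im ≠ 0) : Function.Surjective (FF (n := n) z) := by
  have hn1 : 1 < 2 * n := by have := NeZero.ne n; omega
  rw [← AlgHom.range_eq_top]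
  refine top_of_mem _ ((z : ℍ[ℝ])) ?_ ?_ ?_ ?_ ?_
  · have h1 : FF z (MonoidAlgebra.of ℝ (QuaternionGroup n) (QuaternionGroup.a 1)) = (z : ℍ[ℝ]) := by
      rw [FF_of hz]
      show ((E z 1 : ℂ) : ℍ[ℝ]) = _
      rw [E_one hz hn1]
    exact ⟨_, h1⟩
  · simpa using him
  · simp
  · simp
  · have : J = FF z (MonoidAlgebra.of ℝ (QuaternionGroup n) (QuaternionGroup.xa 0)) := by
      rw [FF_of hz]
      simp [phi, E_zero]
    rw [this]; exact ⟨_, rfl⟩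

/-! ### Classification of surjective maps -/

omit hz in
lemma pow_eq_one_nonneg {x : ℝ} (hx : 0 ≤ x) {N : ℕ} (hN : N ≠ 0) (h : x ^ N = 1) : x = 1 := by
  rcases lt_trichotomy x 1 with h1 | h1 | h1
  · have := pow_lt_one₀ hx h1 hN; linarith
  · exact h1
  · have := one_lt_pow₀ h1 hN; linarith

omit hz in
lemma coeComplex_pow (w : ℂ) (k : ℕ) : ((w ^ k : ℂ) : ℍ[ℝ]) = (w : ℍ[ℝ]) ^ k := by
  have := map_pow Quaternion.ofComplex w k
  simpa using this

omit hz in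
open QuaternionGroup in
lemma classify (f : MonoidAlgebra ℝ (QuaternionGroup n) →ₐ[ℝ] ℍ[ℝ])
    (hf : Function.Surjective f) :
    ∃ w : ℂ, (w ^ n = -1 ∧ 0 < w.im) ∧ {m | f m = 0} = {m | FF (n := n) w m = 0} := by
  have hnn := NeZero.ne n
  have hn1 : 1 < 2 * n := by omega
  haveI : NeZero (2*n) := ⟨by omega⟩
  set of' := MonoidAlgebra.of ℝ (QuaternionGroup n) with hof
  set q := f (of' (a 1)) with hq
  set u := f (of' (xa 0)) with hu
  have ha_pow : ∀ i : ZMod (2*n), f (of' (a i)) = q ^ i.val := by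
    intro i
    rw [hq, ← map_pow, ← map_pow]
    congr 2
    rw [QuaternionGroup.a_one_pow]
    congr 1
    exact (ZMod.natCast_rightInverse i).symm
  have h2n : q ^ (2*n) = 1 := by
    rw [hq, ← map_pow, ← map_pow, QuaternionGroup.a_one_pow_n, map_one, map_one]
  have hxa_pow : ∀ i : ZMod (2*n), f (of' (xa i)) = u * q ^ i.val := by
    intro i
    have h0 : (xa i : QuaternionGroup n) = xa 0 * a i := by
      rw [QuaternionGroup.xa_mul_a, zero_add]
    rw [h0, map_mul, map_mul, ha_pow, hu]
  have hnormq : normSq q = 1 := by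
    have h : normSq q ^ (2*n) = 1 := by rw [← map_pow, h2n, map_one]
    exact pow_eq_one_nonneg Quaternion.normSq_nonneg (by omega) h
  have hun : u * u = q ^ n := by
    have h0 : (xa 0 : QuaternionGroup n) * xa 0 = a (n : ZMod (2*n)) := by
      rw [QuaternionGroup.xa_mul_xa]; norm_num
    have h1 : u * u = f (of' (a (n : ZMod (2*n)))) := by
      rw [hu, ← map_mul, ← map_mul, h0]
    rw [h1, ha_pow]
    congr 1
    rw [ZMod.val_natCast, Nat.mod_eq_of_lt (by omega)]
  -- the commutation relation
  set c := f (of' (a (-1))) with hcc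
  have hc1 : q * c = 1 := by
    rw [hq, hcc, ← map_mul, ← map_mul, QuaternionGroup.a_mul_a, add_neg_cancel,
      ← QuaternionGroup.one_def, map_one, map_one]
  have hcstar : c = star q := by
    have hs1 : star q * q = 1 := by
      rw [Quaternion.star_mul_self, hnormq]; simp
    calc c = (star q * q) * c := by rw [hs1, one_mul]
      _ = star q * (q * c) := by rw [mul_assoc]
      _ = star q := by rw [hc1, mul_one]
  have hcomm : q * u = u * star q := by
    have e1 : (a 1 : QuaternionGroup n) * xa 0 = xa 0 * a (-1) := by
      rw [QuaternionGroup.a_mul_xa, QuaternionGroup.xa_mul_a, zero_sub, zero_add]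
    have := congrArg f (congrArg of' e1)
    rw [map_mul, map_mul, map_mul, map_mul] at this
    rw [← hq, ← hu, ← hcc, hcstar] at this
    exact this
  by_cases hpure : q.imI = 0 ∧ q.imJ = 0 ∧ q.imK = 0
  · -- impossible: f would not be surjective
    exfalso
    obtain ⟨h1, h2, h3⟩ := hpure
    have hqre : q = ((q.re : ℝ) : ℍ[ℝ]) := by ext <;> simp [h1, h2, h3]
    set T := Submodule.span ℝ ({1, u} : Set ℍ[ℝ]) with hT
    have h1T : (1 : ℍ[ℝ]) ∈ T := Submodule.subset_span (by simp)
    have huT : u ∈ T := Submodule.subset_span (by simp)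
    have hfT : ∀ m, f m ∈ T := by
      intro m
      induction m using MonoidAlgebra.induction_on with
      | of g =>
        rcases g with i | i
        · rw [show (MonoidAlgebra.of ℝ (QuaternionGroup n)) (a i) = of' (a i) from rfl, ha_pow,
            hqre, ← Quaternion.coe_pow,
            show ((q.re ^ i.val : ℝ) : ℍ[ℝ]) = (q.re ^ i.val) • (1:ℍ[ℝ]) from by
              rw [← Quaternion.coe_mul_eq_smul, mul_one]]
          exact T.smul_mem _ h1T
        · rw [show (MonoidAlgebra.of ℝ (QuaternionGroup n)) (xa i) = of' (xa i) from rfl,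
            hxa_pow, hqre, ← Quaternion.coe_pow, Quaternion.mul_coe_eq_smul]
          exact T.smul_mem _ huT
      | add f g hfm hgm => rw [map_add]; exact T.add_mem hfm hgm
      | smul r m hm => rw [map_smul]; exact T.smul_mem _ hm
    obtain ⟨mi, hmi⟩ := hf II
    obtain ⟨mj, hmj⟩ := hf J
    have hIT : II ∈ T := hmi ▸ hfT mi
    have hJT : J ∈ T := hmj ▸ hfT mj
    rw [Submodule.mem_span_pair] at hIT hJT
    obtain ⟨a1, b1, hab⟩ := hIT
    obtain ⟨a2, b2, hcd⟩ := hJT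
    have e1 := congrArg QuaternionAlgebra.imI hab
    have e2 := congrArg QuaternionAlgebra.imJ hab
    have e3 := congrArg QuaternionAlgebra.imI hcd
    have e4 := congrArg QuaternionAlgebra.imJ hcd
    simp only [Quaternion.imI_add, Quaternion.imJ_add, Quaternion.imI_smul, Quaternion.imJ_smul,
      Quaternion.imI_one, Quaternion.imJ_one, smul_eq_mul, mul_zero, zero_add, add_zero, II, J] at e1 e2 e3 e4
    nlinarith [e1, e2, e3, e4]
  · -- main case
    have hsq : 0 < q.imI^2 + q.imJ^2 + q.imK^2 := by
      have h' : q.imI ≠ 0 ∨ q.imJ ≠ 0 ∨ q.imK ≠ 0 := by tauto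
      rcases h' with h | h | h <;> positivity
    set s : ℝ := Real.sqrt (q.imI^2 + q.imJ^2 + q.imK^2) with hsdef
    have hs : 0 < s := Real.sqrt_pos.2 hsq
    have hs2 : s^2 = q.imI^2 + q.imJ^2 + q.imK^2 := Real.sq_sqrt hsq.le
    -- u.re = 0
    have eI := congrArg QuaternionAlgebra.imI hcomm
    have eJ := congrArg QuaternionAlgebra.imJ hcomm
    have eK := congrArg QuaternionAlgebra.imK hcomm
    have eR := congrArg QuaternionAlgebra.re hcomm
    simp only [Quaternion.imI_mul, Quaternion.imJ_mul, Quaternion.imK_mul, Quaternion.re_mul,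
      Quaternion.re_star, Quaternion.imI_star, Quaternion.imJ_star, Quaternion.imK_star,
      mul_neg, neg_neg] at eI eJ eK eR
    have hure : u.re = 0 := by
      have h' : q.imI ≠ 0 ∨ q.imJ ≠ 0 ∨ q.imK ≠ 0 := by tauto
      rcases h' with h | h | h
      · have : u.re * q.imI = 0 := by linarith
        exact (mul_eq_zero.1 this).resolve_right h
      · have : u.re * q.imJ = 0 := by linarith
        exact (mul_eq_zero.1 this).resolve_right h
      · have : u.re * q.imK = 0 := by linarith
        exact (mul_eq_zero.1 this).resolve_right h
    -- u * u = -1 and q ^ n = -1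
    have huu : u * u = ((-(u.imI^2 + u.imJ^2 + u.imK^2) : ℝ) : ℍ[ℝ]) := by
      ext <;> simp only [Quaternion.re_mul, Quaternion.imI_mul, Quaternion.imJ_mul,
        Quaternion.imK_mul, Quaternion.re_coe, Quaternion.imI_coe, Quaternion.imJ_coe,
        Quaternion.imK_coe, hure] <;> ring
    have hnu : normSq u = 1 := by
      have h' : normSq u ^ 2 = 1 := by
        have : normSq (u * u) = normSq (q ^ n) := by rw [hun]
        rw [map_mul, map_pow, hnormq, one_pow] at this
        rw [sq]; exact this
      exact pow_eq_one_nonneg Quaternion.normSq_nonneg two_ne_zero h'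
    have hsumu : u.imI^2 + u.imJ^2 + u.imK^2 = normSq u := by
      rw [Quaternion.normSq_def', hure]; ring
    have huu1 : u * u = -1 := by
      rw [huu, hsumu, hnu, Quaternion.coe_neg, Quaternion.coe_one]
    have hqn1 : q ^ n = -1 := by rw [← hun, huu1]
    -- the pure part
    set p : ℍ[ℝ] := q - ((q.re : ℝ) : ℍ[ℝ]) with hp
    have hcr : ∀ (r : ℝ) (w : ℍ[ℝ]), (r : ℍ[ℝ]) * w = w * (r : ℍ[ℝ]) := fun r w => by
      rw [Quaternion.coe_mul_eq_smul, Quaternion.mul_coe_eq_smul]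
    have hstarq : star q = ((2 * q.re : ℝ) : ℍ[ℝ]) - q := by
      rw [← Quaternion.self_add_star' q]; abel
    have hpu : p * u = -(u * p) := by
      have expand : ((2 * q.re : ℝ) : ℍ[ℝ]) = (q.re : ℍ[ℝ]) + (q.re : ℍ[ℝ]) := by
        rw [two_mul, Quaternion.coe_add]
      calc p * u = q * u - (q.re : ℍ[ℝ]) * u := by rw [hp]; noncomm_ring
        _ = u * star q - (q.re : ℍ[ℝ]) * u := by rw [hcomm]
        _ = u * (((q.re : ℍ[ℝ]) + (q.re : ℍ[ℝ])) - q) - (q.re : ℍ[ℝ]) * u := by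
            rw [hstarq, expand]
        _ = u * (((q.re : ℍ[ℝ]) + (q.re : ℍ[ℝ])) - q) - u * (q.re : ℍ[ℝ]) := by
            rw [hcr]
        _ = -(u * p) := by rw [hp]; noncomm_ring
    set v : ℍ[ℝ] := s⁻¹ • p with hv
    have hpp : p * p = ((-(q.imI^2 + q.imJ^2 + q.imK^2) : ℝ) : ℍ[ℝ]) := by
      ext <;> simp only [hp, Quaternion.re_mul, Quaternion.imI_mul, Quaternion.imJ_mul,
        Quaternion.imK_mul, Quaternion.re_sub, Quaternion.imI_sub, Quaternion.imJ_sub,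
        Quaternion.imK_sub, Quaternion.re_coe, Quaternion.imI_coe, Quaternion.imJ_coe,
        Quaternion.imK_coe] <;> ring
    have hvv : v * v = -1 := by
      rw [hv, smul_mul_smul_comm, hpp, Quaternion.smul_coe]
      rw [show s⁻¹ * s⁻¹ * -(q.imI^2 + q.imJ^2 + q.imK^2) = -1 from by
        rw [← hs2]; field_simp]
      rw [Quaternion.coe_neg, Quaternion.coe_one]
    have hvu : u * v = -(v * u) := by
      have h' : u * p = -(p * u) := by rw [hpu, neg_neg]
      rw [hv, mul_smul_comm, smul_mul_assoc, h', smul_neg]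
    -- the basis and the induced endomorphism
    let B : QuaternionAlgebra.Basis ℍ[ℝ] (-1 : ℝ) (0 : ℝ) (-1 : ℝ) :=
      { i := v, j := u, k := v * u,
        i_mul_i := by rw [hvv, zero_smul, add_zero, neg_smul, one_smul]
        j_mul_j := by rw [huu1, neg_smul, one_smul]
        i_mul_j := rfl
        j_mul_i := by rw [zero_smul, zero_sub]; exact hvu }
    let psi : ℍ[ℝ] →ₐ[ℝ] ℍ[ℝ] := B.liftHom
    have hpsi_inj : Function.Injective psi := by
      have : Function.Injective (psi : ℍ[ℝ] →+* ℍ[ℝ]) := RingHom.injective _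
      exact this
    have hBi : B.i = v := rfl
    have hBj : B.j = u := rfl
    have hBk : B.k = v * u := rfl
    have hpsiJ : psi J = u := by
      show B.lift J = u
      unfold QuaternionAlgebra.Basis.lift
      rw [hBi, hBj, hBk]
      simp only [show J.re = 0 from rfl, show J.imI = 0 from rfl, show J.imJ = 1 from rfl,
        show J.imK = 0 from rfl, map_zero, zero_smul, one_smul, zero_add, add_zero]
    have hpsicoe : ∀ w : ℂ, psi ((w : ℍ[ℝ])) = (w.re : ℍ[ℝ]) + w.im • v := by
      intro w
      show B.lift _ = _
      unfold QuaternionAlgebra.Basis.lift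
      rw [hBi, hBj, hBk]
      simp only [Quaternion.re_coeComplex, Quaternion.imI_coeComplex, Quaternion.imJ_coeComplex,
        Quaternion.imK_coeComplex, zero_smul, add_zero, Quaternion.algebraMap_def]
    set zz : ℂ := ⟨q.re, s⟩ with hzz
    have hpsiz : psi ((zz : ℍ[ℝ])) = q := by
      rw [hpsicoe]
      show (q.re : ℍ[ℝ]) + s • v = q
      rw [hv, smul_inv_smul₀ hs.ne', hp]
      abel
    have hzzn : zz ^ n = -1 := by
      apply coeComplex_injective
      apply hpsi_inj
      show psi ((zz ^ n : ℂ) : ℍ[ℝ]) = psi ((((-1 : ℂ)) : ℍ[ℝ]))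
      rw [coeComplex_pow, map_pow, hpsiz, hqn1]
      rw [show ((-1 : ℂ) : ℍ[ℝ]) = -1 from by rw [show (-1 : ℂ) = -(1:ℂ) from rfl, coeComplex_neg, Quaternion.coeComplex_one]]
      rw [map_neg, map_one]
    refine ⟨zz, ⟨hzzn, hs⟩, ?_⟩
    have hfcomp : f = psi.comp (FF (n := n) zz) := by
      refine MonoidAlgebra.algHom_ext ?_ (Subsingleton.elim _ _)
      intro g
      rw [AlgHom.comp_apply]
      rw [show (MonoidAlgebra.single g (1:ℝ) : MonoidAlgebra ℝ (QuaternionGroup n)) =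
        of' g from rfl]
      rw [show FF (n := n) zz (of' g) = phi zz g from FF_of hzzn g]
      rcases g with i | i
      · rw [ha_pow]
        show q ^ i.val = psi ((E zz i : ℂ) : ℍ[ℝ])
        rw [E, coeComplex_pow, map_pow, hpsiz]
      · rw [hxa_pow]
        show u * q ^ i.val = psi (J * ((E zz i : ℂ) : ℍ[ℝ]))
        rw [map_mul, hpsiJ, E, coeComplex_pow, map_pow, hpsiz]
    ext m
    simp only [Set.mem_setOf_eq]
    rw [hfcomp, AlgHom.comp_apply]
    constructor
    · intro h0
      apply hpsi_inj
      rw [h0, map_zero]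
    · intro h0
      rw [h0, map_zero]

/-! ### Distinguishing kernels -/

lemma conj_eq_inv : (starRingEnd ℂ) z = z⁻¹ := by
  have h1 := abs_z hz
  rw [Complex.inv_def, Complex.normSq_eq_norm_sq, h1]
  simp

open QuaternionGroup in
lemma FF_test (r : ℝ) :
    FF (n := n) z (MonoidAlgebra.single (a 1) 1 + MonoidAlgebra.single (a (-1)) 1
      - MonoidAlgebra.single 1 (2*r))
    = ((2*z.re - 2*r : ℝ) : ℍ[ℝ]) := by
  have hn1 : 1 < 2 * n := by have := NeZero.ne n; omega
  rw [map_sub, map_add, FF_single hz, FF_single hz, FF_single hz]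
  rw [show ((1 : QuaternionGroup n)) = a 0 from rfl]
  show (1:ℝ) • ((E z 1 : ℂ) : ℍ[ℝ]) + (1:ℝ) • ((E z (-1) : ℂ) : ℍ[ℝ])
      - (2*r) • ((E z 0 : ℂ) : ℍ[ℝ]) = _
  rw [E_one hz hn1, show (-1 : ZMod (2*n)) = -(1 : ZMod (2*n)) from rfl, E_neg hz,
    E_one hz hn1, E_zero, ← conj_eq_inv hz]
  rw [one_smul, one_smul]
  rw [show ((z : ℍ[ℝ]) + ((starRingEnd ℂ) z : ℍ[ℝ])) = (((z + (starRingEnd ℂ) z : ℂ)) : ℍ[ℝ])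
    from (Quaternion.coeComplex_add _ _).symm]
  rw [Complex.add_conj]
  ext <;> simp <;> ring

open QuaternionGroup in
lemma ker_inj {z' : ℂ} (hz' : z' ^ n = -1) (him : 0 < z.im) (him' : 0 < z'.im)
    (hker : {m | FF (n := n) z m = 0} = {m | FF (n := n) z' m = 0}) : z = z' := by
  have h1 : FF (n := n) z (MonoidAlgebra.single (a 1) 1 + MonoidAlgebra.single (a (-1)) 1
      - MonoidAlgebra.single 1 (2*z.re)) = 0 := by
    rw [FF_test hz z.re]
    norm_num
  have h2 : FF (n := n) z' (MonoidAlgebra.single (a 1) 1 + MonoidAlgebra.single (a (-1)) 1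
      - MonoidAlgebra.single 1 (2*z.re)) = 0 := by
    rw [Set.ext_iff] at hker
    exact (hker _).1 h1
  rw [FF_test hz' z.re] at h2
  have h3 : (2*z'.re - 2*z.re : ℝ) = 0 := by
    have := congrArg QuaternionAlgebra.re h2
    simpa using this
  have hre : z.re = z'.re := by linarith
  have habs : ‖z‖ = ‖z'‖ := by rw [abs_z hz, abs_z hz']
  have hsq : z.re^2 + z.im^2 = z'.re^2 + z'.im^2 := by
    have h4 : Complex.normSq z = Complex.normSq z' := by
      rw [Complex.normSq_eq_norm_sq, Complex.normSq_eq_norm_sq, habs]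
    simpa [Complex.normSq_apply, sq] using h4
  have h5 : z.im^2 = z'.im^2 := by rw [hre] at hsq; linarith
  have him2 : z.im = z'.im := by
    have h6 : |z.im| = |z'.im| := by rw [← Real.sqrt_sq_eq_abs, ← Real.sqrt_sq_eq_abs, h5]
    rwa [abs_of_pos him, abs_of_pos him'] at h6
  exact Complex.ext hre him2

/-! ### Counting the roots -/

omit hz in
lemma exp_angle_pow (m : ℕ) (hm : 2*m+1 < n) :
    Complex.exp ((((2*m+1) * Real.pi / n : ℝ) : ℂ) * Complex.I) ^ n = -1 := by
  have hnn := NeZero.ne n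
  have hnpos : (0:ℝ) < n := by positivity
  rw [← Complex.exp_nat_mul]
  rw [show ((n : ℂ) * ((((2*m+1) * Real.pi / n : ℝ) : ℂ) * Complex.I))
      = (((2*m+1 : ℕ) : ℂ)) * ((Real.pi : ℂ) * Complex.I) from by
    push_cast
    have : (n : ℂ) ≠ 0 := by exact_mod_cast hnn
    field_simp]
  rw [Complex.exp_nat_mul, Complex.exp_pi_mul_I, Odd.neg_one_pow ⟨m, by ring⟩]

omit hz in
lemma root_count :
    ({w : ℂ | w ^ n = -1 ∧ 0 < w.im} : Set ℂ) =
      (fun m : ℕ => Complex.exp ((((2*m+1) * Real.pi / n : ℝ) : ℂ) * Complex.I)) ''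
        (Set.Iio (n/2)) := by
  have hnn := NeZero.ne n
  have hnpos : (0:ℝ) < n := by positivity
  have hpi := Real.pi_pos
  ext w
  simp only [Set.mem_setOf_eq, Set.mem_image, Set.mem_Iio]
  constructor
  · rintro ⟨hw, him⟩
    have habs : ‖w‖ = 1 := abs_z hw
    have hwarg : w = Complex.exp ((w.arg : ℂ) * Complex.I) := by
      conv_lhs => rw [← Complex.norm_mul_exp_arg_mul_I w]
      rw [habs]
      simp
    have hsin : 0 < Real.sin w.arg := by
      rw [Complex.sin_arg, habs]
      simpa using him
    have harg_pos : 0 < w.arg := by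
      by_contra hle
      push_neg at hle
      have := Real.sin_nonpos_of_nonpos_of_neg_pi_le hle (Complex.neg_pi_lt_arg w).le
      linarith
    have harg_lt : w.arg < Real.pi := by
      rcases lt_or_eq_of_le (Complex.arg_le_pi w) with h | h
      · exact h
      · exfalso; rw [h] at hsin; simp [Real.sin_pi] at hsin
    have hexp : Complex.exp ((((n : ℝ) * w.arg - Real.pi : ℝ) : ℂ) * Complex.I) = 1 := by
      rw [show ((((n : ℝ) * w.arg - Real.pi : ℝ) : ℂ) * Complex.I)
          = (n : ℂ) * ((w.arg : ℂ) * Complex.I) - (Real.pi : ℂ) * Complex.I from by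
        push_cast; ring]
      rw [Complex.exp_sub, Complex.exp_nat_mul, ← hwarg, hw, Complex.exp_pi_mul_I]
      norm_num
    rw [Complex.exp_eq_one_iff] at hexp
    obtain ⟨k, hk⟩ := hexp
    have hk' : (n : ℝ) * w.arg - Real.pi = k * (2 * Real.pi) := by
      have h5 := congrArg Complex.im hk
      rw [show ((k : ℂ) * (2 * (Real.pi : ℂ) * Complex.I))
          = (((k : ℝ) * (2 * Real.pi) : ℝ) : ℂ) * Complex.I from by push_cast; ring] at h5
      simpa using h5
    have hkpos : 0 ≤ k := by
      by_contra hneg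
      push_neg at hneg
      have : (k : ℝ) ≤ -1 := by exact_mod_cast Int.le_sub_one_of_lt hneg
      nlinarith [mul_pos hnpos harg_pos]
    have hkr : ((k.toNat : ℕ) : ℝ) = (k : ℝ) := by exact_mod_cast Int.toNat_of_nonneg hkpos
    have hargeq : w.arg = ((2*(k.toNat : ℕ)+1) * Real.pi / n : ℝ) := by
      push_cast
      rw [hkr]
      field_simp
      nlinarith [hk']
    have hkn : 2 * k.toNat + 1 < n := by
      have h6 : ((2*(k.toNat : ℕ)+1 : ℕ) : ℝ) * Real.pi / n < Real.pi := by
        push_cast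
        rw [← hargeq]
        exact harg_lt
      rw [div_lt_iff₀ hnpos] at h6
      have h7 : ((2*(k.toNat : ℕ)+1 : ℕ) : ℝ) < n := by nlinarith
      exact_mod_cast h7
    refine ⟨k.toNat, by omega, ?_⟩
    rw [show (((2*(k.toNat : ℕ)+1) * Real.pi / n : ℝ) : ℂ) = ((w.arg : ℝ) : ℂ) from by
      rw [← hargeq]]
    rw [← hwarg]
  · rintro ⟨m, hm, rfl⟩
    have h2m : 2 * m + 1 < n := by omega
    refine ⟨exp_angle_pow m h2m, ?_⟩
    rw [Complex.exp_ofReal_mul_I_im]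
    apply Real.sin_pos_of_pos_of_lt_pi
    · positivity
    · rw [div_lt_iff₀ hnpos]
      have : ((2*m+1 : ℕ) : ℝ) < n := by exact_mod_cast h2m
      push_cast at this ⊢
      nlinarith

omit hz in
lemma root_inj : Set.InjOn
    (fun m : ℕ => Complex.exp ((((2*m+1) * Real.pi / n : ℝ) : ℂ) * Complex.I))
    (Set.Iio (n/2)) := by
  have hnn := NeZero.ne n
  have hnpos : (0:ℝ) < n := by positivity
  have hpi := Real.pi_pos
  intro m1 h1 m2 h2 heq
  simp only [Set.mem_Iio] at h1 h2
  have key : ∀ m : ℕ, m < n/2 → ((2*m+1) * Real.pi / n : ℝ) ∈ Set.Icc 0 Real.pi := by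
    intro m hm
    constructor
    · positivity
    · rw [div_le_iff₀ hnpos]
      have h3 : (2*m+1 : ℕ) ≤ n := by omega
      have : ((2*m+1 : ℕ) : ℝ) ≤ n := by exact_mod_cast h3
      push_cast at this
      nlinarith
  have hre2 : Real.cos ((2*m1+1) * Real.pi / n : ℝ) = Real.cos ((2*m2+1) * Real.pi / n : ℝ) := by
    have e1 := Complex.exp_ofReal_mul_I_re ((2*m1+1) * Real.pi / n : ℝ)
    have e2 := Complex.exp_ofReal_mul_I_re ((2*m2+1) * Real.pi / n : ℝ)
    rw [← e1, ← e2]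
    simp only at heq
    rw [heq]
  have heqang := Real.injOn_cos (key m1 h1) (key m2 h2) hre2
  have harg : (2*(m1:ℝ)+1) = (2*(m2:ℝ)+1) := by
    field_simp at heqang
    exact heqang
  have : m1 = m2 := by
    have : (m1 : ℝ) = m2 := by linarith
    exact_mod_cast this
  exact this


end Stmt17
end

/-- The number of copies of `ℍ` in the Wedderburn decomposition of a real algebra `A`,
realised as the number of two-sided ideals of `A` arising as kernels of surjective
ℝ-algebra homomorphisms `A → ℍ`. -/
noncomputable def mH (A : Type*) [Ring A] [Algebra ℝ A] : ℕ :=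
  Set.ncard {s : Set A | ∃ f : A →ₐ[ℝ] Quaternion ℝ,
    Function.Surjective f ∧ s = {a : A | f a = 0}}

/-- For `n ≥ 2`, the number of copies of `ℍ` in the Wedderburn decomposition
of `ℝ[Q_{4n}]` equals `⌊n/2⌋`.  (`Q_{4n} = QuaternionGroup n`.) -/
theorem stmt_17 (n : ℕ) (hn : 2 ≤ n) :
    mH (MonoidAlgebra ℝ (QuaternionGroup n)) = n / 2 := by
  haveI : NeZero n := ⟨by omega⟩
  rw [mH]
  have hset : {s : Set (MonoidAlgebra ℝ (QuaternionGroup n)) |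
      ∃ f : MonoidAlgebra ℝ (QuaternionGroup n) →ₐ[ℝ] Quaternion ℝ,
      Function.Surjective f ∧ s = {a | f a = 0}}
      = (fun z : ℂ => {m : MonoidAlgebra ℝ (QuaternionGroup n) | Stmt17.FF (n := n) z m = 0}) ''
        {w : ℂ | w ^ n = -1 ∧ 0 < w.im} := by
    ext s
    simp only [Set.mem_setOf_eq, Set.mem_image]
    constructor
    · rintro ⟨f, hf, rfl⟩
      obtain ⟨w, hw, hkeq⟩ := Stmt17.classify f hf
      exact ⟨w, hw, hkeq.symm⟩
    · rintro ⟨w, ⟨hw1, hw2⟩, rfl⟩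
      exact ⟨Stmt17.FF w, Stmt17.FF_surjective hw1 hw2.ne', rfl⟩
  rw [hset]
  have hinj : Set.InjOn
      (fun z : ℂ => {m : MonoidAlgebra ℝ (QuaternionGroup n) | Stmt17.FF (n := n) z m = 0})
      {w : ℂ | w ^ n = -1 ∧ 0 < w.im} := by
    intro w1 h1 w2 h2 heq
    exact Stmt17.ker_inj h1.1 h2.1 h1.2 h2.2 heq
  rw [Set.ncard_image_of_injOn hinj, Stmt17.root_count,
    Set.ncard_image_of_injOn Stmt17.root_inj]
  rw [← Finset.coe_Iio, Set.ncard_coe_finset, Nat.card_Iio]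
end
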